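/- Separable lower bound Q_sep^M = 4³ is valid as an upper bound for the fixed-measurement strategy: for any 4×4 density matrices {ρ_x^A}_{x=1}^{16}, {ρ_y^B}_{y=1}^{16}, the quantity Σ_{x,y,z} H_{xyz} Tr(2A_z ρ_x^A) Tr(2A_z ρ_y^B), with H_{xyz} = Tr((A_z A_x)²) Tr((A_z A_y)²), is at most 4³ = 64. -/

import Mathlib

open Matrix Kronecker

/-- The Pauli matrices: `σp 0 = I`, `σp 1 = X`, `σp 2 = Y`, `σp 3 = Z`. -/
noncomputable def σp : Fin 4 → Matrix (Fin 2) (Fin 2) ℂ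
  | 0 => 1
  | 1 => !![0, 1; 1, 0]
  | 2 => !![0, -Complex.I; Complex.I, 0]
  | 3 => !![1, 0; 0, -1]

/-- The normalized Pauli products `A_k = (1/2) σ_{k₀} ⊗ σ_{k₁}`, viewed as 4×4 matrices. -/
noncomputable def Ap (k : Fin 4 × Fin 4) : Matrix (Fin 2 × Fin 2) (Fin 2 × Fin 2) ℂ :=
  (1/2 : ℂ) • (σp k.1 ⊗ₖ σp k.2)

open ComplexOrder

lemma kron_conjT (A B : Matrix (Fin 2) (Fin 2) ℂ) : (A ⊗ₖ B)ᴴ = Aᴴ ⊗ₖ Bᴴ := by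
  ext i j
  simp [conjTranspose_apply, kroneckerMap_apply, mul_comm]

lemma sp_herm (a : Fin 4) : (σp a)ᴴ = σp a := by
  fin_cases a <;> simp [σp] <;>
    ext i j <;> fin_cases i <;> fin_cases j <;>
      simp [conjTranspose_apply]

lemma Ap_herm (z : Fin 4 × Fin 4) : (Ap z)ᴴ = Ap z := by
  simp [Ap, conjTranspose_smul, kron_conjT, sp_herm, RCLike.star_def]

lemma sp_trace (a b : Fin 4) : (σp a * σp b).trace = if a = b then 2 else 0 := by
  fin_cases a <;> fin_cases b <;>
    simp [σp, Matrix.one_fin_two, Matrix.trace_fin_two, Matrix.mul_apply, Fin.sum_univ_succ] <;>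
    ring_nf <;> simp [Complex.I_sq]

lemma Ap_mul (z w : Fin 4 × Fin 4) :
    Ap z * Ap w = (1/4 : ℂ) • ((σp z.1 * σp w.1) ⊗ₖ (σp z.2 * σp w.2)) := by
  rw [Ap, Ap, smul_mul_smul_comm, ← mul_kronecker_mul]
  norm_num

lemma Ap_mul_trace (z w : Fin 4 × Fin 4) :
    (Ap z * Ap w).trace = (1/4 : ℂ) * ((σp z.1 * σp w.1).trace * (σp z.2 * σp w.2).trace) := by
  rw [Ap_mul, trace_smul, trace_kronecker, smul_eq_mul]

lemma Ap_orth (z w : Fin 4 × Fin 4) : (Ap z * Ap w).trace = if z = w then 1 else 0 := by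
  rw [Ap_mul_trace, sp_trace, sp_trace]
  by_cases h1 : z.1 = w.1 <;> by_cases h2 : z.2 = w.2 <;>
    simp [Prod.ext_iff, h1, h2] <;> norm_num

lemma c_real {ρ : Matrix (Fin 2 × Fin 2) (Fin 2 × Fin 2) ℂ} (hρ : ρ.IsHermitian)
    (z : Fin 4 × Fin 4) :
    (starRingEnd ℂ) ((((2:ℂ) • Ap z) * ρ).trace) = (((2:ℂ) • Ap z) * ρ).trace := by
  have h : star ((((2:ℂ) • Ap z) * ρ).trace) = ((((2:ℂ) • Ap z) * ρ)ᴴ).trace :=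
    (Matrix.trace_conjTranspose _).symm
  rw [RCLike.star_def] at h
  rw [h, conjTranspose_mul, hρ.eq, conjTranspose_smul, Ap_herm, trace_mul_comm]
  norm_num

lemma trace_conjT_mul_self_nonneg (M : Matrix (Fin 2 × Fin 2) (Fin 2 × Fin 2) ℂ) :
    0 ≤ ((Mᴴ * M).trace).re := by
  have h : (Mᴴ * M).trace = ∑ j, ∑ i, (starRingEnd ℂ) (M i j) * M i j := by
    simp [Matrix.trace, Matrix.mul_apply, conjTranspose_apply, Matrix.diag]
  rw [h]
  rw [Complex.re_sum]
  apply Finset.sum_nonneg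
  intro j _
  rw [Complex.re_sum]
  apply Finset.sum_nonneg
  intro i _
  rw [mul_comm, Complex.mul_conj]
  simpa using Complex.normSq_nonneg (M i j)

lemma trace_sq_le_one {ρ : Matrix (Fin 2 × Fin 2) (Fin 2 × Fin 2) ℂ}
    (hρ : ρ.PosSemidef) (h1 : ρ.trace = 1) : (ρ * ρ).trace.re ≤ 1 := by
  have hH := hρ.1
  have hspec := hH.spectral_theorem
  rw [Unitary.conjStarAlgAut_apply] at hspec
  set U : Matrix (Fin 2 × Fin 2) (Fin 2 × Fin 2) ℂ :=
    ((hH.eigenvectorUnitary : unitaryGroup (Fin 2 × Fin 2) ℂ) :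
      Matrix (Fin 2 × Fin 2) (Fin 2 × Fin 2) ℂ)
  set D : Matrix (Fin 2 × Fin 2) (Fin 2 × Fin 2) ℂ := diagonal (RCLike.ofReal ∘ hH.eigenvalues)
  have hU : star U * U = 1 := Matrix.UnitaryGroup.star_mul_self _
  have hsq : ρ * ρ = U * (D * D) * star U := by
    rw [hspec]
    simp only [Matrix.mul_assoc]
    rw [← Matrix.mul_assoc (star U) U, hU, one_mul]
  have htr : (ρ * ρ).trace = (D * D).trace := by
    rw [hsq, trace_mul_cycle, hU, one_mul]
  have htr1 : ρ.trace = D.trace := by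
    rw [hspec, trace_mul_cycle, hU, one_mul]
  have hDD : (D * D).trace = ∑ i, ((hH.eigenvalues i : ℂ) * (hH.eigenvalues i)) := by
    simp [D, diagonal_mul_diagonal, trace_diagonal]
  have hD : D.trace = ∑ i, (hH.eigenvalues i : ℂ) := by
    simp [D, trace_diagonal]
  have hsum : ∑ i, hH.eigenvalues i = 1 := by
    have := h1
    rw [htr1, hD] at this
    have := congrArg Complex.re this
    simpa using this
  have hnn : ∀ i ∈ Finset.univ, 0 ≤ hH.eigenvalues i := fun i _ => hρ.eigenvalues_nonneg i
  calc (ρ * ρ).trace.re = ∑ i, (hH.eigenvalues i)^2 := by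
        rw [htr, hDD]; push_cast; simp [sq]
    _ ≤ (∑ i, hH.eigenvalues i)^2 := Finset.sum_sq_le_sq_sum_of_nonneg hnn
    _ = 1 := by rw [hsum]; norm_num

lemma parseval {ρ : Matrix (Fin 2 × Fin 2) (Fin 2 × Fin 2) ℂ}
    (hρ : ρ.PosSemidef) (h1 : ρ.trace = 1) :
    ∑ z : Fin 4 × Fin 4, ((((2:ℂ) • Ap z) * ρ).trace.re)^2 ≤ 4 := by
  set c : Fin 4 × Fin 4 → ℂ := fun z => (((2:ℂ) • Ap z) * ρ).trace with hc
  have hcr : ∀ z, (starRingEnd ℂ) (c z) = c z := fun z => c_real hρ.1 z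
  have hcre : ∀ z, ((c z).re : ℂ) = c z := fun z => (Complex.conj_eq_iff_re.mp (hcr z))
  have hc2 : ∀ z, (Ap z * ρ).trace = c z / 2 := by
    intro z
    have : c z = 2 * (Ap z * ρ).trace := by
      rw [hc]; simp [smul_mul_assoc, trace_smul]
    rw [this]; ring
  set S : Matrix (Fin 2 × Fin 2) (Fin 2 × Fin 2) ℂ := ∑ z, (c z / 2) • Ap z with hS
  have hSρ : (S * ρ).trace = ∑ z, c z ^ 2 / 4 := by
    rw [hS, Finset.sum_mul]
    simp only [smul_mul_assoc]
    rw [trace_sum]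
    simp only [trace_smul, hc2, smul_eq_mul]
    congr 1; funext z; ring
  have hρS : (ρ * S).trace = ∑ z, c z ^ 2 / 4 := by
    rw [trace_mul_comm, hSρ]
  have hSS : (S * S).trace = ∑ z, c z ^ 2 / 4 := by
    rw [hS, Finset.sum_mul]
    rw [trace_sum]
    have : ∀ z, ((c z / 2) • Ap z * ∑ w, (c w / 2) • Ap w).trace = c z ^ 2 / 4 := by
      intro z
      rw [Finset.mul_sum, trace_sum]
      have : ∀ w, ((c z / 2) • Ap z * ((c w / 2) • Ap w)).trace
          = (c z / 2) * (c w / 2) * (if z = w then 1 else 0) := by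
        intro w
        rw [smul_mul_assoc, mul_smul_comm, trace_smul, trace_smul, Ap_orth, smul_eq_mul,
          smul_eq_mul]
        ring
      simp only [this]
      rw [Finset.sum_eq_single z]
      · simp; ring
      · intro w _ hw; simp [Ne.symm hw]
      · simp
    simp only [this]
  have hSherm : Sᴴ = S := by
    rw [hS, conjTranspose_sum]
    congr 1; funext z
    rw [conjTranspose_smul, Ap_herm]
    congr 1
    rw [star_div₀]
    rw [show (star (c z) : ℂ) = c z from hcr z]
    norm_num
  have hkey : ((ρ - S)ᴴ * (ρ - S)).trace = (ρ * ρ).trace - ∑ z, c z ^ 2 / 4 := by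
    rw [conjTranspose_sub, hρ.1.eq, hSherm, sub_mul, mul_sub, mul_sub, trace_sub, trace_sub,
      trace_sub, hSρ, hρS, hSS]
    ring
  have h0 := trace_conjT_mul_self_nonneg (ρ - S)
  rw [hkey] at h0
  have h2 : (∑ z, c z ^ 2 / 4).re ≤ (ρ * ρ).trace.re := by
    have := h0
    simp only [Complex.sub_re] at this
    linarith
  have h3 : (∑ z, c z ^ 2 / 4).re = ∑ z, ((c z).re)^2 / 4 := by
    rw [Complex.re_sum]
    refine Finset.sum_congr rfl fun z _ => ?_
    have hz : c z ^ 2 / 4 = ((((c z).re)^2 / 4 : ℝ) : ℂ) := by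
      rw [← hcre z]; norm_cast
    rw [hz, Complex.ofReal_re]
  have h4 := trace_sq_le_one hρ h1
  rw [h3] at h2
  have : ∑ z, ((c z).re)^2 / 4 ≤ 1 := le_trans h2 h4
  have := (Finset.sum_div (Finset.univ) (fun z => ((c z).re)^2) 4).symm ▸ this
  linarith [this]

lemma sp_sq_trace (a b : Fin 4) :
    ((σp a * σp b) * (σp a * σp b)).trace = 2 ∨ ((σp a * σp b) * (σp a * σp b)).trace = -2 := by
  fin_cases a <;> fin_cases b <;>
    simp [σp, Matrix.one_fin_two, Matrix.trace_fin_two, Matrix.mul_apply, Fin.sum_univ_succ] <;>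
    ring_nf <;> simp [Complex.I_sq]

lemma Ap_sq_trace (z x : Fin 4 × Fin 4) :
    ((Ap z * Ap x) * (Ap z * Ap x)).trace
      = (1/16 : ℂ) * (((σp z.1 * σp x.1) * (σp z.1 * σp x.1)).trace
          * ((σp z.2 * σp x.2) * (σp z.2 * σp x.2)).trace) := by
  rw [Ap_mul, smul_mul_smul_comm, ← mul_kronecker_mul, trace_smul, trace_kronecker,
    smul_eq_mul]
  ring

lemma Ap_sq_val (z x : Fin 4 × Fin 4) :
    ((Ap z * Ap x) * (Ap z * Ap x)).trace = 1/4 ∨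
      ((Ap z * Ap x) * (Ap z * Ap x)).trace = -(1/4) := by
  rw [Ap_sq_trace]
  rcases sp_sq_trace z.1 x.1 with h1 | h1 <;> rcases sp_sq_trace z.2 x.2 with h2 | h2 <;>
    rw [h1, h2] <;> norm_num


open ComplexOrder in
/-- Separable upper bound for the fixed-measurement strategy: for any families of
four-dimensional density matrices `{ρ_x^A}` and `{ρ_y^B}`, the quantity
`Σ_{x,y,z} H_{xyz} Tr(2A_z ρ_x^A) Tr(2A_z ρ_y^B)` with
`H_{xyz} = Tr((A_z A_x)²) Tr((A_z A_y)²)` is at most `4³ = 64`. -/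
theorem separable_bound_fixed_measurements
    (ρA ρB : (Fin 4 × Fin 4) → Matrix (Fin 2 × Fin 2) (Fin 2 × Fin 2) ℂ)
    (hρA : ∀ x, (ρA x).PosSemidef ∧ (ρA x).trace = 1)
    (hρB : ∀ y, (ρB y).PosSemidef ∧ (ρB y).trace = 1) :
    (∑ x : Fin 4 × Fin 4, ∑ y : Fin 4 × Fin 4, ∑ z : Fin 4 × Fin 4,
        ((Ap z * Ap x) * (Ap z * Ap x)).trace * ((Ap z * Ap y) * (Ap z * Ap y)).trace
          * (((2:ℂ) • Ap z) * ρA x).trace * (((2:ℂ) • Ap z) * ρB y).trace).re ≤ 64 := by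
  set e : Fin 4 × Fin 4 → Fin 4 × Fin 4 → ℝ :=
    fun z x => ((Ap z * Ap x) * (Ap z * Ap x)).trace.re with he
  set a : Fin 4 × Fin 4 → Fin 4 × Fin 4 → ℝ :=
    fun x z => ((((2:ℂ) • Ap z) * ρA x).trace).re with ha
  set b : Fin 4 × Fin 4 → Fin 4 × Fin 4 → ℝ :=
    fun y z => ((((2:ℂ) • Ap z) * ρB y).trace).re with hb
  have heval : ∀ z x, ((Ap z * Ap x) * (Ap z * Ap x)).trace = ((e z x : ℝ) : ℂ) := by
    intro z x
    rcases Ap_sq_val z x with h | h <;> rw [he] <;> simp only <;> rw [h] <;> norm_num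
  have habs : ∀ z x, |e z x| = 1/4 := by
    intro z x
    rcases Ap_sq_val z x with h | h <;> rw [he] <;> simp only <;> rw [h] <;> norm_num
  have haval : ∀ x z, (((2:ℂ) • Ap z) * ρA x).trace = ((a x z : ℝ) : ℂ) := by
    intro x z
    exact (Complex.conj_eq_iff_re.mp (c_real (hρA x).1.1 z)).symm
  have hbval : ∀ y z, (((2:ℂ) • Ap z) * ρB y).trace = ((b y z : ℝ) : ℂ) := by
    intro y z
    exact (Complex.conj_eq_iff_re.mp (c_real (hρB y).1.1 z)).symm
  have hterm : ∀ x y z : Fin 4 × Fin 4,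
      (((Ap z * Ap x) * (Ap z * Ap x)).trace * ((Ap z * Ap y) * (Ap z * Ap y)).trace
        * (((2:ℂ) • Ap z) * ρA x).trace * (((2:ℂ) • Ap z) * ρB y).trace).re
        = e z x * e z y * a x z * b y z := by
    intro x y z
    rw [heval z x, heval z y, haval x z, hbval y z, ← Complex.ofReal_mul,
      ← Complex.ofReal_mul, ← Complex.ofReal_mul, Complex.ofReal_re]
  rw [Complex.re_sum]
  simp only [Complex.re_sum, hterm]
  have hinner : ∀ x y : Fin 4 × Fin 4,
      ∑ z : Fin 4 × Fin 4, e z x * e z y * a x z * b y z ≤ 1/4 := by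
    intro x y
    have hA2 : ∑ z : Fin 4 × Fin 4, (a x z)^2 ≤ 4 := parseval (hρA x).1 (hρA x).2
    have hB2 : ∑ z : Fin 4 × Fin 4, (b y z)^2 ≤ 4 := parseval (hρB y).1 (hρB y).2
    have hcs : (∑ z : Fin 4 × Fin 4, |a x z| * |b y z|)^2
        ≤ (∑ z : Fin 4 × Fin 4, |a x z|^2) * ∑ z : Fin 4 × Fin 4, |b y z|^2 :=
      Finset.sum_mul_sq_le_sq_mul_sq _ _ _
    simp only [sq_abs] at hcs
    have hnn : 0 ≤ ∑ z : Fin 4 × Fin 4, |a x z| * |b y z| :=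
      Finset.sum_nonneg fun z _ => mul_nonneg (abs_nonneg _) (abs_nonneg _)
    have hab : ∑ z : Fin 4 × Fin 4, |a x z| * |b y z| ≤ 4 := by
      nlinarith [hcs, hA2, hB2, Finset.sum_nonneg (fun z (_ : z ∈ Finset.univ) => sq_nonneg (a x z)),
        Finset.sum_nonneg (fun z (_ : z ∈ Finset.univ) => sq_nonneg (b y z))]
    calc ∑ z : Fin 4 × Fin 4, e z x * e z y * a x z * b y z
        ≤ ∑ z : Fin 4 × Fin 4, (1/16) * (|a x z| * |b y z|) := by
          apply Finset.sum_le_sum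
          intro z _
          calc e z x * e z y * a x z * b y z ≤ |e z x * e z y * a x z * b y z| := le_abs_self _
            _ = |e z x| * |e z y| * |a x z| * |b y z| := by rw [abs_mul, abs_mul, abs_mul]
            _ = (1/16) * (|a x z| * |b y z|) := by rw [habs, habs]; ring
      _ = (1/16) * ∑ z : Fin 4 × Fin 4, |a x z| * |b y z| := by rw [Finset.mul_sum]
      _ ≤ (1/16) * 4 := by linarith
      _ = 1/4 := by norm_num
  calc ∑ x : Fin 4 × Fin 4, ∑ y : Fin 4 × Fin 4, ∑ z : Fin 4 × Fin 4,
        e z x * e z y * a x z * b y z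
      ≤ ∑ _x : Fin 4 × Fin 4, ∑ _y : Fin 4 × Fin 4, (1/4 : ℝ) := by
        apply Finset.sum_le_sum
        intro x _
        exact Finset.sum_le_sum fun y _ => hinner x y
    _ = 64 := by simp; norm_num
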